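/- The map κ⁺ : 𝕊⁺ → Sp(d,ℝ) sending (a,s,t₁,t̃) to the block matrix [[M(s,a), 0],[σ(t₁,t̃)M(s,a), M(s,a)^{−T}]] is an injective group homomorphism from the connected shearlet group into the symplectic group. -/

import Mathlib

open Matrix

/-- Underlying set of the connected shearlet group:
`ℝ⁺ × ℝ^{d-1} × ℝ × ℝ^{d-1}`. -/
abbrev ShearletPos (d : ℕ) : Type :=
  {a : ℝ // 0 < a} × (Fin (d - 1) → ℝ) × ℝ × (Fin (d - 1) → ℝ)

/-- Connected shearlet group operation
`(a,s,t₁,t̃)∘(a',s',t₁',t̃') = (aa', s + a^{1-γ}s', t₁ + at₁' + a^γ sᵀt̃', t̃ + a^γ t̃')`. -/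
noncomputable def shPosMul (d : ℕ) (γ : ℝ) (x y : ShearletPos d) : ShearletPos d :=
  ⟨⟨x.1.1 * y.1.1, mul_pos x.1.2 y.1.2⟩,
    fun i => x.2.1 i + x.1.1 ^ (1 - γ) * y.2.1 i,
    x.2.2.1 + x.1.1 * y.2.2.1 + x.1.1 ^ γ * (x.2.1 ⬝ᵥ y.2.2.2),
    fun i => x.2.2.2 i + x.1.1 ^ γ * y.2.2.2 i⟩

/-- `Ã_{a,γ} = diag(a^{-1/2}, a^{1/2-γ} I_{d-1})`. -/
noncomputable def Atil (d : ℕ) (γ a : ℝ) :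
    Matrix (Fin 1 ⊕ Fin (d - 1)) (Fin 1 ⊕ Fin (d - 1)) ℝ :=
  Matrix.fromBlocks (a ^ (-(1 : ℝ) / 2) • 1) 0 0 (a ^ ((1 : ℝ) / 2 - γ) • 1)

/-- `S̃_s = [[1, 0], [-s, I_{d-1}]]`. -/
def Stil (d : ℕ) (s : Fin (d - 1) → ℝ) :
    Matrix (Fin 1 ⊕ Fin (d - 1)) (Fin 1 ⊕ Fin (d - 1)) ℝ :=
  Matrix.fromBlocks 1 0 (Matrix.of fun i (_ : Fin 1) => -s i) 1

/-- `M(s,a) = S̃_s Ã_{a,γ}`. -/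
noncomputable def Mmat (d : ℕ) (γ a : ℝ) (s : Fin (d - 1) → ℝ) :
    Matrix (Fin 1 ⊕ Fin (d - 1)) (Fin 1 ⊕ Fin (d - 1)) ℝ :=
  Stil d s * Atil d γ a

/-- `σ(t₁,t̃) = [[t₁, (1/2)t̃ᵀ], [(1/2)t̃, 0]]`. -/
noncomputable def sigMat (d : ℕ) (t₁ : ℝ) (tt : Fin (d - 1) → ℝ) :
    Matrix (Fin 1 ⊕ Fin (d - 1)) (Fin 1 ⊕ Fin (d - 1)) ℝ :=
  Matrix.fromBlocks (Matrix.of fun _ _ => t₁)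
    (Matrix.of fun (_ : Fin 1) j => (1 / 2) * tt j)
    (Matrix.of fun i (_ : Fin 1) => (1 / 2) * tt i) 0

/-- `κ⁺(a,s,t₁,t̃) = [[M(s,a), 0], [σ(t₁,t̃)M(s,a), M(s,a)⁻ᵀ]]`. -/
noncomputable def kappaPlus (d : ℕ) (γ : ℝ) (x : ShearletPos d) :
    Matrix ((Fin 1 ⊕ Fin (d - 1)) ⊕ (Fin 1 ⊕ Fin (d - 1)))
      ((Fin 1 ⊕ Fin (d - 1)) ⊕ (Fin 1 ⊕ Fin (d - 1))) ℝ :=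
  Matrix.fromBlocks (Mmat d γ x.1.1 x.2.1) 0
    (sigMat d x.2.2.1 x.2.2.2 * Mmat d γ x.1.1 x.2.1) ((Mmat d γ x.1.1 x.2.1)⁻¹)ᵀ

lemma Mmat_eq (d : ℕ) (γ a : ℝ) (s : Fin (d - 1) → ℝ) :
    Mmat d γ a s = Matrix.fromBlocks (a ^ (-(1:ℝ)/2) • 1) 0
      (Matrix.of fun i (_ : Fin 1) => -s i * a ^ (-(1:ℝ)/2)) (a ^ ((1:ℝ)/2 - γ) • 1) := by
  rw [Mmat, Stil, Atil, Matrix.fromBlocks_multiply]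
  simp
  ext i j
  simp [Matrix.mul_apply, Matrix.one_apply, mul_comm]

lemma Mmat_mul {a a' : ℝ} (ha : 0 < a) (ha' : 0 < a') (d : ℕ) (γ : ℝ)
    (s s' : Fin (d - 1) → ℝ) :
    Mmat d γ a s * Mmat d γ a' s' =
      Mmat d γ (a * a') (fun i => s i + a ^ ((1:ℝ) - γ) * s' i) := by
  rw [Mmat_eq, Mmat_eq, Mmat_eq, Matrix.fromBlocks_multiply, Matrix.fromBlocks_inj]
  have h1 : (a * a') ^ (-(1:ℝ)/2) = a ^ (-(1:ℝ)/2) * a' ^ (-(1:ℝ)/2) :=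
    Real.mul_rpow ha.le ha'.le
  have h2 : (a * a') ^ ((1:ℝ)/2 - γ) = a ^ ((1:ℝ)/2 - γ) * a' ^ ((1:ℝ)/2 - γ) :=
    Real.mul_rpow ha.le ha'.le
  have h3 : a ^ ((1:ℝ) - γ) * a ^ (-(1:ℝ)/2) = a ^ ((1:ℝ)/2 - γ) := by
    rw [← Real.rpow_add ha]; congr 1; ring
  refine ⟨?_, by simp, ?_, ?_⟩
  · simp [smul_smul, h1, mul_comm]
  · simp only [Matrix.mul_smul, Matrix.mul_one, Matrix.smul_mul, Matrix.one_mul,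
      Matrix.mul_zero, Matrix.zero_mul, add_zero, zero_add]
    ext i j
    simp only [Matrix.add_apply, Matrix.smul_apply, Matrix.of_apply, smul_eq_mul, h1]
    rw [← h3]; ring
  · simp only [Matrix.zero_mul, zero_add, Matrix.smul_mul, Matrix.one_mul, Matrix.mul_smul,
      smul_smul, Matrix.mul_one]
    rw [h2, mul_comm (a ^ ((1:ℝ)/2 - γ))]
    simp

lemma Mmat_one (d : ℕ) (γ : ℝ) : Mmat d γ 1 0 = 1 := by
  rw [Mmat_eq]
  simp only [Real.one_rpow, one_smul, neg_zero, Pi.zero_apply, zero_mul]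
  have h0 : (Matrix.of fun (i : Fin (d-1)) (_ : Fin 1) => (0:ℝ)) = 0 := rfl
  rw [h0, Matrix.fromBlocks_one]

/-- candidate inverse of `Mmat d γ a s` -/
noncomputable def MmatInv (d : ℕ) (γ a : ℝ) (s : Fin (d - 1) → ℝ) :
    Matrix (Fin 1 ⊕ Fin (d - 1)) (Fin 1 ⊕ Fin (d - 1)) ℝ :=
  Mmat d γ a⁻¹ (fun i => -(a ^ (γ - 1)) * s i)

lemma rpow_inv_eq {a : ℝ} (ha : 0 < a) (x : ℝ) : a⁻¹ ^ x = a ^ (-x) := by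
  rw [Real.inv_rpow ha.le, ← Real.rpow_neg ha.le]

lemma Mmat_mul_inv {a : ℝ} (ha : 0 < a) (d : ℕ) (γ : ℝ) (s : Fin (d - 1) → ℝ) :
    Mmat d γ a s * MmatInv d γ a s = 1 := by
  rw [MmatInv, Mmat_mul ha (inv_pos.mpr ha)]
  have : (fun i => s i + a ^ ((1:ℝ) - γ) * (-(a ^ (γ - 1)) * s i)) = (0 : Fin (d-1) → ℝ) := by
    funext i
    have : a ^ ((1:ℝ) - γ) * a ^ (γ - 1) = 1 := by
      rw [← Real.rpow_add ha]; norm_num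
    simp only [Pi.zero_apply]
    linear_combination (-s i) * this
  rw [this, mul_inv_cancel₀ ha.ne', Mmat_one]

lemma Mmat_inv_mul {a : ℝ} (ha : 0 < a) (d : ℕ) (γ : ℝ) (s : Fin (d - 1) → ℝ) :
    MmatInv d γ a s * Mmat d γ a s = 1 := by
  rw [MmatInv, Mmat_mul (inv_pos.mpr ha) ha]
  have : (fun i => -(a ^ (γ - 1)) * s i + a⁻¹ ^ ((1:ℝ) - γ) * s i) = (0 : Fin (d-1) → ℝ) := by
    funext i
    rw [rpow_inv_eq ha]
    have : (-((1:ℝ) - γ)) = γ - 1 := by ring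
    rw [this]
    simp only [Pi.zero_apply]; ring
  rw [this, inv_mul_cancel₀ ha.ne', Mmat_one]

lemma Mmat_inv_eq {a : ℝ} (ha : 0 < a) (d : ℕ) (γ : ℝ) (s : Fin (d - 1) → ℝ) :
    (Mmat d γ a s)⁻¹ = MmatInv d γ a s :=
  Matrix.inv_eq_right_inv (Mmat_mul_inv ha d γ s)

lemma sigMat_transpose (d : ℕ) (t₁ : ℝ) (tt : Fin (d - 1) → ℝ) :
    (sigMat d t₁ tt)ᵀ = sigMat d t₁ tt := by
  rw [sigMat, Matrix.fromBlocks_transpose, Matrix.fromBlocks_inj]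
  refine ⟨by ext i j; simp, by ext i j; simp, by ext i j; simp, by simp⟩

lemma sigMat_add (d : ℕ) (t₁ u₁ : ℝ) (tt uu : Fin (d - 1) → ℝ) :
    sigMat d t₁ tt + sigMat d u₁ uu = sigMat d (t₁ + u₁) (fun i => tt i + uu i) := by
  rw [sigMat, sigMat, sigMat, Matrix.fromBlocks_add, Matrix.fromBlocks_inj]
  refine ⟨by ext i j; simp, by ext i j; simp; ring, by ext i j; simp; ring, by simp⟩

lemma sig_conj {a : ℝ} (ha : 0 < a) (d : ℕ) (γ : ℝ) (s uu : Fin (d - 1) → ℝ) (u₁ : ℝ) :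
    (Mmat d γ a s)ᵀ * sigMat d u₁ uu * Mmat d γ a s =
      sigMat d (a⁻¹ * (u₁ - s ⬝ᵥ uu)) (fun i => a ^ (-γ) * uu i) := by
  have hαα : a ^ (-(1:ℝ)/2) * a ^ (-(1:ℝ)/2) = a⁻¹ := by
    rw [← Real.rpow_add ha, ← Real.rpow_neg_one]; norm_num
  have hαβ : a ^ (-(1:ℝ)/2) * a ^ ((1:ℝ)/2 - γ) = a ^ (-γ) := by
    rw [← Real.rpow_add ha]; congr 1; ring
  rw [Mmat_eq, sigMat, sigMat, Matrix.fromBlocks_transpose, Matrix.fromBlocks_multiply,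
    Matrix.fromBlocks_multiply, Matrix.fromBlocks_inj]
  refine ⟨?_, ?_, ?_, ?_⟩
  · ext i j
    simp [Matrix.mul_apply, dotProduct]
    have hs1 : ∑ x : Fin (d-1), s x * a ^ (-(1:ℝ)/2) * uu x
        = a ^ (-(1:ℝ)/2) * ∑ x : Fin (d-1), s x * uu x := by
      rw [Finset.mul_sum]; exact Finset.sum_congr rfl (by intros; ring)
    have hs2 : ∑ x : Fin (d-1), uu x * (s x * a ^ (-(1:ℝ)/2))
        = a ^ (-(1:ℝ)/2) * ∑ x : Fin (d-1), s x * uu x := by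
      rw [Finset.mul_sum]; exact Finset.sum_congr rfl (by intros; ring)
    have hs3 : ∑ x : Fin (d-1), s x * a ^ (-(1:ℝ)/2) * (2⁻¹ * uu x)
        = 2⁻¹ * a ^ (-(1:ℝ)/2) * ∑ x : Fin (d-1), s x * uu x := by
      rw [Finset.mul_sum]; exact Finset.sum_congr rfl (by intros; ring)
    have hs4 : ∑ x : Fin (d-1), a ^ (-(1:ℝ)/2) * (2⁻¹ * uu x) * (s x * a ^ (-(1:ℝ)/2))
        = 2⁻¹ * a ^ (-(1:ℝ)/2) * a ^ (-(1:ℝ)/2) * ∑ x : Fin (d-1), s x * uu x := by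
      rw [Finset.mul_sum]; exact Finset.sum_congr rfl (by intros; ring)
    rw [hs3, hs4]
    linear_combination (u₁ - ∑ x : Fin (d-1), s x * uu x) * hαα
  · ext i j
    simp [Matrix.mul_apply, dotProduct]
    rw [show ((2:ℝ)⁻¹ - γ) = (1:ℝ)/2 - γ by norm_num]
    linear_combination (2⁻¹ * uu j) * hαβ
  · ext i j
    simp [Matrix.mul_apply, dotProduct]
    rw [show ((2:ℝ)⁻¹ - γ) = (1:ℝ)/2 - γ by norm_num]
    linear_combination (2⁻¹ * uu i) * hαβ
  · simp [Matrix.mul_apply]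

lemma kappa_mem (d : ℕ) (γ : ℝ) (x : ShearletPos d) :
    kappaPlus d γ x ∈ Matrix.symplecticGroup (Fin 1 ⊕ Fin (d - 1)) ℝ := by
  obtain ⟨⟨a, ha⟩, s, t₁, tt⟩ := x
  rw [SymplecticGroup.mem_iff, Matrix.J, kappaPlus]
  simp only
  rw [Mmat_inv_eq ha, Matrix.fromBlocks_transpose, Matrix.fromBlocks_multiply,
    Matrix.fromBlocks_multiply, Matrix.fromBlocks_inj]
  have h1 : Mmat d γ a s * (MmatInv d γ a s)ᵀᵀ = 1 := by
    rw [Matrix.transpose_transpose, Mmat_mul_inv ha]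
  have h2 : (MmatInv d γ a s)ᵀ * (Mmat d γ a s)ᵀ = 1 := by
    rw [← Matrix.transpose_mul, Mmat_mul_inv ha, Matrix.transpose_one]
  refine ⟨by simp, ?_, ?_, ?_⟩
  · simp only [Matrix.mul_zero, Matrix.mul_neg, Matrix.mul_one, Matrix.zero_mul, zero_add,
      Matrix.zero_mul, add_zero, Matrix.neg_mul, Matrix.transpose_mul]
    rw [h1]
  · simp only [Matrix.mul_zero, Matrix.mul_one, Matrix.zero_mul, zero_add, add_zero,
      Matrix.mul_neg, Matrix.neg_mul]
    rw [h2]; simp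
  · simp only [Matrix.mul_zero, Matrix.mul_one, Matrix.zero_mul, zero_add, add_zero,
      Matrix.mul_neg, Matrix.neg_mul, Matrix.transpose_mul]
    rw [← Matrix.mul_assoc, h2, Matrix.one_mul, sigMat_transpose, Matrix.mul_assoc, h1,
      Matrix.mul_one]
    simp

lemma kappa_conj {a : ℝ} (ha : 0 < a) (d : ℕ) (γ : ℝ) (s uu : Fin (d - 1) → ℝ) (u₁ : ℝ) :
    ((Mmat d γ a s)⁻¹)ᵀ * sigMat d u₁ uu * (Mmat d γ a s)⁻¹ =
      sigMat d (a * u₁ + a ^ γ * (s ⬝ᵥ uu)) (fun i => a ^ γ * uu i) := by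
  rw [Mmat_inv_eq ha, MmatInv, sig_conj (inv_pos.mpr ha)]
  have hd : (fun i => -(a ^ (γ-1)) * s i) ⬝ᵥ uu = -(a ^ (γ-1)) * (s ⬝ᵥ uu) := by
    simp only [dotProduct, Finset.mul_sum]
    exact Finset.sum_congr rfl (by intros; ring)
  have h : a * a ^ (γ - 1) = a ^ γ := by
    nth_rewrite 1 [← Real.rpow_one a]
    rw [← Real.rpow_add ha]; congr 1; ring
  have e1 : a⁻¹⁻¹ * (u₁ - (fun i => -(a ^ (γ-1)) * s i) ⬝ᵥ uu)
      = a * u₁ + a ^ γ * (s ⬝ᵥ uu) := by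
    rw [inv_inv, hd]
    linear_combination ((s ⬝ᵥ uu : ℝ)) * h
  have e2 : (fun i => a⁻¹ ^ (-γ) * uu i) = fun i => a ^ γ * uu i := by
    funext i; rw [rpow_inv_eq ha, neg_neg]
  rw [e1, e2]

lemma kappa_mul (d : ℕ) (γ : ℝ)
    (x y : ShearletPos d) :
    kappaPlus d γ
      ⟨⟨x.1.1 * y.1.1, mul_pos x.1.2 y.1.2⟩,
        fun i => x.2.1 i + x.1.1 ^ (1 - γ) * y.2.1 i,
        x.2.2.1 + x.1.1 * y.2.2.1 + x.1.1 ^ γ * (x.2.1 ⬝ᵥ y.2.2.2),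
        fun i => x.2.2.2 i + x.1.1 ^ γ * y.2.2.2 i⟩
      = kappaPlus d γ x * kappaPlus d γ y := by
  obtain ⟨⟨a, ha⟩, s, t₁, tt⟩ := x
  obtain ⟨⟨b, hb⟩, s', u₁, uu⟩ := y
  simp only [kappaPlus]
  have hM : Mmat d γ (a * b) (fun i => s i + a ^ ((1:ℝ) - γ) * s' i) =
      Mmat d γ a s * Mmat d γ b s' := (Mmat_mul ha hb d γ s s').symm
  have hσz : sigMat d (t₁ + a * u₁ + a ^ γ * (s ⬝ᵥ uu)) (fun i => tt i + a ^ γ * uu i)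
      = sigMat d t₁ tt + sigMat d (a * u₁ + a ^ γ * (s ⬝ᵥ uu)) (fun i => a ^ γ * uu i) := by
    rw [sigMat_add, add_assoc]
  rw [Matrix.fromBlocks_multiply, Matrix.fromBlocks_inj]
  refine ⟨?_, by simp, ?_, ?_⟩
  · simp only [Matrix.zero_mul, add_zero]; exact hM
  · rw [hσz, hM, Matrix.add_mul, ← kappa_conj ha d γ s uu u₁,
      Matrix.mul_assoc (((Mmat d γ a s)⁻¹)ᵀ * sigMat d u₁ uu), Mmat_inv_eq ha,
      ← Matrix.mul_assoc (MmatInv d γ a s), Mmat_inv_mul ha, Matrix.one_mul, Matrix.mul_assoc,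
      ← Matrix.mul_assoc (sigMat d t₁ tt)]
  · simp only [Matrix.mul_zero, zero_add]
    rw [hM, Matrix.mul_inv_rev, Matrix.transpose_mul]

lemma kappa_inj (d : ℕ) (γ : ℝ) : Function.Injective (kappaPlus d γ) := by
  intro x y h
  obtain ⟨⟨a, ha⟩, s, t₁, tt⟩ := x
  obtain ⟨⟨b, hb⟩, s', u₁, uu⟩ := y
  simp only [kappaPlus] at h
  rw [Matrix.fromBlocks_inj] at h
  obtain ⟨hM, -, hσ, -⟩ := h
  have hM' := hM
  rw [Mmat_eq, Mmat_eq, Matrix.fromBlocks_inj] at hM'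
  obtain ⟨hA, -, hC, -⟩ := hM'
  have hab : a ^ (-(1:ℝ)/2) = b ^ (-(1:ℝ)/2) := by
    have := congrFun (congrFun hA (0 : Fin 1)) (0 : Fin 1)
    simpa using this
  have hab' : a = b := by
    have h2 : ((-(1:ℝ)/2) * (-2:ℝ)) = 1 := by norm_num
    calc a = a ^ ((-(1:ℝ)/2) * (-2:ℝ)) := by rw [h2, Real.rpow_one]
    _ = (a ^ (-(1:ℝ)/2)) ^ (-2:ℝ) := Real.rpow_mul ha.le _ _
    _ = (b ^ (-(1:ℝ)/2)) ^ (-2:ℝ) := by rw [hab]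
    _ = b ^ ((-(1:ℝ)/2) * (-2:ℝ)) := (Real.rpow_mul hb.le _ _).symm
    _ = b := by rw [h2, Real.rpow_one]
  subst hab'
  have hαne : a ^ (-(1:ℝ)/2) ≠ 0 := (Real.rpow_pos_of_pos ha _).ne'
  have hs : s = s' := by
    funext i
    have h3 := congrFun (congrFun hC i) (0 : Fin 1)
    simp only [Matrix.of_apply] at h3
    have h4 := mul_right_cancel₀ hαne h3
    linarith
  subst hs
  have hσ' : sigMat d t₁ tt = sigMat d u₁ uu := by
    have h5 := congrArg (fun A => A * MmatInv d γ a s) hσ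
    simpa [Matrix.mul_assoc, Mmat_mul_inv ha] using h5
  rw [sigMat, sigMat, Matrix.fromBlocks_inj] at hσ'
  obtain ⟨h1, -, h3, -⟩ := hσ'
  have ht : t₁ = u₁ := by simpa using congrFun (congrFun h1 0) 0
  have htt : tt = uu := by
    funext i
    have h6 := congrFun (congrFun h3 i) (0 : Fin 1)
    simp only [Matrix.of_apply] at h6
    linarith
  subst ht; subst htt
  rfl

/-- `κ⁺` is an injective group homomorphism from the connected shearlet group
into the symplectic group. -/
theorem kappaPlus_injective_hom (d : ℕ) (γ : ℝ) :
    Function.Injective (kappaPlus d γ) ∧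
    (∀ x y : ShearletPos d,
      kappaPlus d γ (shPosMul d γ x y) = kappaPlus d γ x * kappaPlus d γ y) ∧
    (∀ x : ShearletPos d, kappaPlus d γ x ∈ Matrix.symplecticGroup (Fin 1 ⊕ Fin (d - 1)) ℝ) := by
  exact ⟨kappa_inj d γ, fun x y => kappa_mul d γ x y, kappa_mem d γ⟩
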